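/- If G is a path Pₙ (with at least one edge) or a cycle Cₙ (n ≥ 3), then χ(G) − φ(G) = 2, where χ(G) is the chromatic number of G and φ(G) is the sparing number of G. -/

import Mathlib

open Pointwise

/-- The induced set-label on unordered pairs: the sumset of the two vertex labels. -/
def edgeLabel {V : Type*} (f : V → Finset ℕ) : Sym2 V → Finset ℕ :=
  Sym2.lift ⟨fun u v => f u + f v, fun u v => add_comm (f u) (f v)⟩

/-- `f` is a weak integer additive set-indexer of `G`. -/
structure IsWeakIASI {V : Type*} (G : SimpleGraph V) (f : V → Finset ℕ) : Prop where
  nonempty : ∀ v, (f v).Nonempty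
  injective : Function.Injective f
  edgeInjective : Set.InjOn (edgeLabel f) G.edgeSet
  weak : ∀ u v, G.Adj u v → (edgeLabel f s(u, v)).card = max (f u).card (f v).card

/-- The number of mono-indexed edges of `G` under the labeling `f`. -/
noncomputable def monoEdgeCount {V : Type*} (G : SimpleGraph V) (f : V → Finset ℕ) : ℕ :=
  {e ∈ G.edgeSet | (edgeLabel f e).card = 1}.ncard

/-- The sparing number: the minimum number of mono-indexed edges over all weak IASIs. -/
noncomputable def sparingNumber {V : Type*} (G : SimpleGraph V) : ℕ :=
  sInf {n | ∃ f, IsWeakIASI G f ∧ monoEdgeCount G f = n}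

open Finset


def lab {n : ℕ} (i : Fin n) : Finset ℕ :=
  if i.val % 2 = 1 then {3 ^ i.val, 2 * 3 ^ i.val} else {3 ^ i.val}

lemma lab_nonempty {n : ℕ} (i : Fin n) : (lab i).Nonempty := by
  unfold lab; split <;> simp

lemma edgeLabel_mk {V : Type*} (f : V → Finset ℕ) (u v : V) :
    edgeLabel f s(u, v) = f u + f v := rfl

lemma pair_add_singleton (a b c : ℕ) :
    ({a, b} : Finset ℕ) + {c} = {a + c, b + c} := by
  ext x
  simp [Finset.mem_add]
  tauto

lemma singleton_add_pair (a b c : ℕ) :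
    ({c} : Finset ℕ) + {a, b} = {a + c, b + c} := by
  rw [add_comm]; exact pair_add_singleton a b c

lemma card_lab_add {n : ℕ} (u v : Fin n) (h : ¬(u.val % 2 = 1 ∧ v.val % 2 = 1)) :
    (lab u + lab v).card = max (lab u).card (lab v).card := by
  unfold lab
  have h3u : (0:ℕ) < 3 ^ u.val := by positivity
  have h3v : (0:ℕ) < 3 ^ v.val := by positivity
  rcases Nat.mod_two_eq_zero_or_one u.val with hu | hu <;>
    rcases Nat.mod_two_eq_zero_or_one v.val with hv | hv <;>
      simp only [hu, hv] <;> norm_num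
  exact absurd ⟨hu, hv⟩ h

lemma lab_min' {n : ℕ} (i : Fin n) : (lab i).min' (lab_nonempty i) = 3 ^ i.val := by
  unfold lab
  split
  · apply le_antisymm
    · exact min'_le _ _ (by simp)
    · apply le_min'
      intro y hy
      simp only [mem_insert, mem_singleton] at hy
      rcases hy with rfl | rfl
      · rfl
      · nlinarith [pow_pos (by norm_num : (0:ℕ) < 3) i.val]
  · simp

lemma lab_card {n : ℕ} (i : Fin n) :
    (lab i).card = if i.val % 2 = 1 then 2 else 1 := by
  unfold lab
  split
  · rw [card_insert_of_notMem (by simp), card_singleton]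
  · simp

lemma min'_add (A B : Finset ℕ) (hA : A.Nonempty) (hB : B.Nonempty) :
    (A + B).min' (hA.add hB) = A.min' hA + B.min' hB := by
  apply le_antisymm
  · exact min'_le _ _ (add_mem_add (min'_mem A hA) (min'_mem B hB))
  · apply le_min'
    intro y hy
    rw [Finset.mem_add] at hy
    obtain ⟨a, ha, b, hb, rfl⟩ := hy
    exact Nat.add_le_add (min'_le _ _ ha) (min'_le _ _ hb)

lemma pow3_aux {a b c d : ℕ} (hab : a < b) (hcd : c < d)
    (h : 3 ^ a + 3 ^ b = 3 ^ c + 3 ^ d) : a = c ∧ b = d := by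
  have key : ∀ a b c d : ℕ, a < b → c < d → 3 ^ a + 3 ^ b = 3 ^ c + 3 ^ d → ¬ a < c := by
    intro a b c d hab hcd h hac
    have h1 : 3 ^ (a + 1) ∣ 3 ^ b := pow_dvd_pow 3 hab
    have h2 : 3 ^ (a + 1) ∣ 3 ^ c := pow_dvd_pow 3 hac
    have h3 : 3 ^ (a + 1) ∣ 3 ^ d := pow_dvd_pow 3 (by omega)
    have h4 : 3 ^ (a + 1) ∣ 3 ^ a + 3 ^ b := h ▸ Nat.dvd_add h2 h3
    have h5 : 3 ^ (a + 1) ∣ 3 ^ a := by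
      have := Nat.dvd_sub h4 h1
      simpa using this
    have := Nat.le_of_dvd (by positivity) h5
    have : (3:ℕ) ^ a < 3 ^ (a + 1) := Nat.pow_lt_pow_right (by norm_num) (by omega)
    omega
  have hac : a = c := by
    rcases lt_trichotomy a c with hlt | rfl | hgt
    · exact absurd hlt (key a b c d hab hcd h)
    · rfl
    · exact absurd hgt (key c d a b hcd hab h.symm)
  subst hac
  have : (3:ℕ) ^ b = 3 ^ d := by omega
  exact ⟨rfl, Nat.pow_right_injective (by norm_num) this⟩

lemma pow3_inj {a b c d : ℕ} (hab : a ≠ b) (hcd : c ≠ d)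
    (h : 3 ^ a + 3 ^ b = 3 ^ c + 3 ^ d) : (a = c ∧ b = d) ∨ (a = d ∧ b = c) := by
  rcases hab.lt_or_gt with h1 | h1 <;> rcases hcd.lt_or_gt with h2 | h2
  · exact Or.inl (pow3_aux h1 h2 h)
  · have := pow3_aux h1 h2 (by omega)
    exact Or.inr ⟨this.1, this.2⟩
  · have := pow3_aux h1 h2 (by omega)
    exact Or.inr ⟨this.2, this.1⟩
  · have := pow3_aux h1 h2 (by omega)
    exact Or.inl ⟨this.2, this.1⟩

lemma mem_lab_self {n : ℕ} (i : Fin n) : 3 ^ i.val ∈ lab i := by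
  unfold lab; split <;> simp

lemma lab_injective {n : ℕ} : Function.Injective (lab (n := n)) := by
  intro i j h
  have h1 : 3 ^ i.val ∈ lab j := h ▸ mem_lab_self i
  have h2 : 3 ^ j.val ∈ lab i := h.symm ▸ mem_lab_self j
  have l1 := (lab_min' j) ▸ Finset.min'_le _ _ h1
  have l2 := (lab_min' i) ▸ Finset.min'_le _ _ h2
  have : i.val = j.val := Nat.pow_right_injective (by norm_num) (le_antisymm l2 l1)
  exact Fin.ext this

lemma lab_IASI {n : ℕ} (G : SimpleGraph (Fin n))
    (hpar : ∀ u v, G.Adj u v → ¬(u.val % 2 = 1 ∧ v.val % 2 = 1)) :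
    IsWeakIASI G lab where
  nonempty := lab_nonempty
  injective := lab_injective
  edgeInjective := by
    intro e1 he1 e2 he2 hL
    induction e1 using Sym2.ind with | _ u v => ?_
    induction e2 using Sym2.ind with | _ x y => ?_
    rw [SimpleGraph.mem_edgeSet] at he1 he2
    rw [edgeLabel_mk, edgeLabel_mk] at hL
    have hmin : 3 ^ u.val + 3 ^ v.val = 3 ^ x.val + 3 ^ y.val := by
      have := min'_add (lab u) (lab v) (lab_nonempty u) (lab_nonempty v)
      have h2 := min'_add (lab x) (lab y) (lab_nonempty x) (lab_nonempty y)
      rw [lab_min', lab_min'] at this h2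
      rw [← this, ← h2]
      congr 1
    have huv : u.val ≠ v.val := fun hc => he1.ne (Fin.ext hc)
    have hxy : x.val ≠ y.val := fun hc => he2.ne (Fin.ext hc)
    rcases pow3_inj huv hxy hmin with ⟨h1, h2⟩ | ⟨h1, h2⟩
    · rw [Sym2.eq_iff]
      exact Or.inl ⟨Fin.ext h1, Fin.ext h2⟩
    · rw [Sym2.eq_iff]
      exact Or.inr ⟨Fin.ext h1, Fin.ext h2⟩
  weak := fun u v hadj => by
    rw [edgeLabel_mk]
    exact card_lab_add u v (hpar u v hadj)



open SimpleGraph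

lemma cycle_adj_cases {m : ℕ} {u v : Fin (m + 3)} (h : (cycleGraph (m + 3)).Adj u v) :
    (u.val = v.val + 1 ∧ v.val + 1 < m + 3) ∨ (v.val = u.val + 1 ∧ u.val + 1 < m + 3) ∨
    (u.val = 0 ∧ v.val = m + 2) ∨ (v.val = 0 ∧ u.val = m + 2) := by
  have hadj : u - v = 1 ∨ v - u = 1 := by
    have : (cycleGraph (m + 1 + 2)).Adj u v := h
    rwa [cycleGraph_adj] at this
  have hval : ∀ a b : Fin (m + 3), a - b = 1 → a.val = (b.val + 1) % (m + 3) := by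
    intro a b hab
    have hab2 : a = b + 1 := by rw [sub_eq_iff_eq_add] at hab; rw [hab]; exact add_comm 1 b
    rw [hab2, Fin.val_add, Fin.val_one (m + 1)]
  rcases hadj with hs | hs
  · have := hval u v hs
    have hv := v.isLt
    rcases Nat.lt_or_ge (v.val + 1) (m + 3) with hlt | hge
    · rw [Nat.mod_eq_of_lt hlt] at this; omega
    · have hv2 : v.val + 1 = m + 3 := by omega
      rw [hv2, Nat.mod_self] at this; omega
  · have := hval v u hs
    have hu := u.isLt
    rcases Nat.lt_or_ge (u.val + 1) (m + 3) with hlt | hge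
    · rw [Nat.mod_eq_of_lt hlt] at this; omega
    · have hu2 : u.val + 1 = m + 3 := by omega
      rw [hu2, Nat.mod_self] at this; omega

-- even cycle 2-coloring
def cycleColoring {m : ℕ} (hpar : (m + 3) % 2 = 0) :
    Coloring (cycleGraph (m + 3)) Bool :=
  Coloring.mk (fun v => v.val % 2 = 0) <| by
    intro u v hadj
    rcases cycle_adj_cases hadj with ⟨h1, h2⟩ | ⟨h1, h2⟩ | ⟨h1, h2⟩ | ⟨h1, h2⟩ <;>
      simp only [ne_eq, decide_eq_decide] <;> omega

-- odd cycle 3-coloring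
def cycleColoring3 {m : ℕ} : Coloring (cycleGraph (m + 3)) (Fin 3) :=
  Coloring.mk (fun v => if v.val = m + 2 then 2 else ⟨v.val % 2, by omega⟩) <| by
    intro u v hadj
    have := cycle_adj_cases hadj
    simp only [ne_eq, Fin.ext_iff]
    split <;> split <;> simp_all <;> omega

-- closed walk of length n in cycleGraph (m+3)
open Fin.NatCast in
def cycleWalk {m : ℕ} : (i : ℕ) → (cycleGraph (m + 3)).Walk 0 (i : Fin (m + 3))
  | 0 => Walk.nil
  | (i + 1) => Walk.concat (cycleWalk i) <| by
      have : ((i + 1 : ℕ) : Fin (m + 3)) = (i : Fin (m + 3)) + 1 := by push_cast; ring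
      rw [this]
      have : (cycleGraph (m + 1 + 2)).Adj (i : Fin (m + 3)) ((i : Fin (m + 3)) + 1) := by
        rw [cycleGraph_adj]
        right
        exact add_sub_cancel_left _ _
      exact this

lemma cycleWalk_length {m : ℕ} (i : ℕ) : (cycleWalk (m := m) i).length = i := by
  induction i with
  | zero => rfl
  | succ i ih => rw [cycleWalk, Walk.length_concat, ih]

open Fin.NatCast in
lemma three_le_chromaticNumber_cycle {m : ℕ} (hodd : (m + 3) % 2 = 1) :
    3 ≤ (cycleGraph (m + 3)).chromaticNumber := by
  have hw : ((m + 3 : ℕ) : Fin (m + 3)) = 0 := by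
    simp [Fin.natCast_self]
  refine Walk.three_le_chromaticNumber_of_odd_loop
    ((cycleWalk (m := m) (m + 3)).copy rfl hw) ?_
  rw [Walk.length_copy, cycleWalk_length]
  exact Nat.odd_iff.mpr hodd

lemma two_le_chromaticNumber_cycle {m : ℕ} :
    2 ≤ (cycleGraph (m + 3)).chromaticNumber := by
  calc (2 : ℕ∞) = (pathGraph (m + 3)).chromaticNumber :=
        (chromaticNumber_pathGraph (m + 3) (by omega)).symm
    _ ≤ _ := chromaticNumber_mono _ pathGraph_le_cycleGraph

lemma chromaticNumber_cycle_even {m : ℕ} (hpar : (m + 3) % 2 = 0) :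
    (cycleGraph (m + 3)).chromaticNumber = 2 := by
  apply le_antisymm
  · have := (cycleColoring hpar).colorable
    simpa using this.chromaticNumber_le
  · exact two_le_chromaticNumber_cycle

lemma chromaticNumber_cycle_odd {m : ℕ} (hpar : (m + 3) % 2 = 1) :
    (cycleGraph (m + 3)).chromaticNumber = 3 := by
  apply le_antisymm
  · have := (cycleColoring3 (m := m)).colorable
    simpa using this.chromaticNumber_le
  · exact three_le_chromaticNumber_cycle hpar

-- ### mono edge counts

lemma path_par {n : ℕ} : ∀ u v : Fin n, (pathGraph n).Adj u v →
    ¬(u.val % 2 = 1 ∧ v.val % 2 = 1) := by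
  intro u v h hc
  rw [pathGraph_adj] at h
  omega

lemma cycle_par {m : ℕ} : ∀ u v : Fin (m + 3), (cycleGraph (m + 3)).Adj u v →
    ¬(u.val % 2 = 1 ∧ v.val % 2 = 1) := by
  intro u v h hc
  rcases cycle_adj_cases h with ⟨h1, h2⟩ | ⟨h1, h2⟩ | ⟨h1, h2⟩ | ⟨h1, h2⟩ <;> omega

lemma card_label_eq_one_iff {n : ℕ} (u v : Fin n) (h : ¬(u.val % 2 = 1 ∧ v.val % 2 = 1)) :
    ((edgeLabel lab s(u, v)).card = 1) ↔ (u.val % 2 = 0 ∧ v.val % 2 = 0) := by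
  rw [edgeLabel_mk, card_lab_add u v h, lab_card, lab_card]
  split_ifs <;> omega

lemma mono_path {n : ℕ} : monoEdgeCount (pathGraph n) lab = 0 := by
  have h : {e ∈ (pathGraph n).edgeSet | (edgeLabel lab e).card = 1} = ∅ := by
    ext e
    induction e using Sym2.ind with | _ u v => ?_
    simp only [Set.mem_sep_iff, Set.mem_empty_iff_false, iff_false, not_and,
      SimpleGraph.mem_edgeSet]
    intro he
    rw [card_label_eq_one_iff u v (path_par u v he)]
    rw [pathGraph_adj] at he
    omega
  rw [monoEdgeCount, h, Set.ncard_empty]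

lemma mono_cycle_even {m : ℕ} (hpar : (m + 3) % 2 = 0) :
    monoEdgeCount (cycleGraph (m + 3)) lab = 0 := by
  have h : {e ∈ (cycleGraph (m + 3)).edgeSet | (edgeLabel lab e).card = 1} = ∅ := by
    ext e
    induction e using Sym2.ind with | _ u v => ?_
    simp only [Set.mem_sep_iff, Set.mem_empty_iff_false, iff_false, not_and,
      SimpleGraph.mem_edgeSet]
    intro he
    rw [card_label_eq_one_iff u v (cycle_par u v he)]
    rcases cycle_adj_cases he with ⟨h1, h2⟩ | ⟨h1, h2⟩ | ⟨h1, h2⟩ | ⟨h1, h2⟩ <;> omega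
  rw [monoEdgeCount, h, Set.ncard_empty]

lemma mono_cycle_odd {m : ℕ} (hodd : (m + 3) % 2 = 1) :
    monoEdgeCount (cycleGraph (m + 3)) lab = 1 := by
  set L : Fin (m + 3) := ⟨m + 2, by omega⟩ with hL
  have hadj : (cycleGraph (m + 3)).Adj (0 : Fin (m + 3)) L := by
    have : (cycleGraph (m + 1 + 2)).Adj (0 : Fin (m + 3)) L := by
      rw [cycleGraph_adj]
      left
      apply Fin.ext
      rw [Fin.sub_def]
      simp [hL, Fin.val_one (m + 1)]
    exact this
  have hS : {e ∈ (cycleGraph (m + 3)).edgeSet | (edgeLabel lab e).card = 1}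
      = {s((0 : Fin (m + 3)), L)} := by
    ext e
    induction e using Sym2.ind with | _ u v => ?_
    simp only [Set.mem_sep_iff, SimpleGraph.mem_edgeSet, Set.mem_singleton_iff]
    constructor
    · rintro ⟨he, hc⟩
      rw [card_label_eq_one_iff u v (cycle_par u v he)] at hc
      rw [Sym2.eq_iff]
      rcases cycle_adj_cases he with ⟨h1, h2⟩ | ⟨h1, h2⟩ | ⟨h1, h2⟩ | ⟨h1, h2⟩
      · omega
      · omega
      · exact Or.inl ⟨Fin.ext h1, Fin.ext (by simp [hL]; omega)⟩
      · exact Or.inr ⟨Fin.ext (by simp [hL]; omega), Fin.ext h1⟩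
    · intro h
      rcases Sym2.eq_iff.mp h with ⟨rfl, rfl⟩ | ⟨rfl, rfl⟩
      · refine ⟨hadj, ?_⟩
        rw [card_label_eq_one_iff _ _ (cycle_par _ _ hadj)]
        simp [hL]
        omega
      · refine ⟨hadj.symm, ?_⟩
        rw [card_label_eq_one_iff _ _ (cycle_par _ _ hadj.symm)]
        simp [hL]
        omega
  rw [monoEdgeCount, hS, Set.ncard_singleton]

-- ### sparing numbers

lemma sparing_path {n : ℕ} : sparingNumber (pathGraph n) = 0 :=
  Nat.sInf_eq_zero.mpr (Or.inl ⟨lab, lab_IASI _ path_par, mono_path⟩)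

lemma sparing_cycle_even {m : ℕ} (hpar : (m + 3) % 2 = 0) :
    sparingNumber (cycleGraph (m + 3)) = 0 :=
  Nat.sInf_eq_zero.mpr (Or.inl ⟨lab, lab_IASI _ cycle_par, mono_cycle_even hpar⟩)

lemma sparing_ge_one_cycle_odd {m : ℕ} (hodd : (m + 3) % 2 = 1)
    (f : Fin (m + 3) → Finset ℕ) (hf : IsWeakIASI (cycleGraph (m + 3)) f) :
    1 ≤ monoEdgeCount (cycleGraph (m + 3)) f := by
  by_contra hcon
  have h0 : monoEdgeCount (cycleGraph (m + 3)) f = 0 := by omega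
  have hemp : {e ∈ (cycleGraph (m + 3)).edgeSet | (edgeLabel f e).card = 1} = ∅ :=
    (Set.ncard_eq_zero (Set.toFinite _)).mp h0
  have c : (cycleGraph (m + 3)).Coloring Bool := by
    refine Coloring.mk (fun v => decide ((f v).card = 1)) ?_
    intro u v hadj hcontra
    simp only [decide_eq_decide] at hcontra
    by_cases h1 : (f u).card = 1
    · have h2 : (f v).card = 1 := hcontra.mp h1
      have hmem : s(u, v) ∈ {e ∈ (cycleGraph (m + 3)).edgeSet | (edgeLabel f e).card = 1} := by
        refine ⟨(cycleGraph (m + 3)).mem_edgeSet.mpr hadj, ?_⟩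
        rw [hf.weak u v hadj, h1, h2]
        exact max_self 1
      rw [hemp] at hmem
      exact Set.notMem_empty _ hmem
    · have h2 : ¬(f v).card = 1 := fun hh => h1 (hcontra.mpr hh)
      have hu1 := (hf.nonempty u).card_pos
      have hv1 := (hf.nonempty v).card_pos
      have hcd := cauchy_davenport_add_of_linearOrder_isCancelAdd
        (hf.nonempty u) (hf.nonempty v)
      have hw := hf.weak u v hadj
      rw [edgeLabel_mk] at hw
      omega
  have hcol : (cycleGraph (m + 3)).Colorable 2 := by simpa using c.colorable
  have hle := hcol.chromaticNumber_le
  have h3 := three_le_chromaticNumber_cycle hodd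
  have : (3 : ℕ∞) ≤ 2 := le_trans h3 hle
  norm_num at this

lemma sparing_cycle_odd {m : ℕ} (hodd : (m + 3) % 2 = 1) :
    sparingNumber (cycleGraph (m + 3)) = 1 := by
  apply le_antisymm
  · have hmem : 1 ∈ {k | ∃ f, IsWeakIASI (cycleGraph (m + 3)) f ∧
        monoEdgeCount (cycleGraph (m + 3)) f = k} :=
      ⟨lab, lab_IASI _ cycle_par, mono_cycle_odd hodd⟩
    exact Nat.sInf_le hmem
  · have hmem : 1 ∈ {k | ∃ f, IsWeakIASI (cycleGraph (m + 3)) f ∧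
        monoEdgeCount (cycleGraph (m + 3)) f = k} :=
      ⟨lab, lab_IASI _ cycle_par, mono_cycle_odd hodd⟩
    apply le_csInf ⟨1, hmem⟩
    rintro b ⟨f, hf, rfl⟩
    exact sparing_ge_one_cycle_odd hodd f hf

/-- If `G` is a path (with at least one edge) or a cycle, then `χ(G) - φ(G) = 2`. -/
theorem chromaticNumber_sub_sparingNumber_path_cycle :
    (∀ n : ℕ, 2 ≤ n →
      (SimpleGraph.pathGraph n).chromaticNumber
        - (sparingNumber (SimpleGraph.pathGraph n) : ℕ∞) = 2) ∧
    (∀ n : ℕ, 3 ≤ n →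
      (SimpleGraph.cycleGraph n).chromaticNumber
        - (sparingNumber (SimpleGraph.cycleGraph n) : ℕ∞) = 2) := by

  constructor
  · intro n hn
    rw [chromaticNumber_pathGraph n hn, sparing_path]
    simp
  · intro n hn
    obtain ⟨m, rfl⟩ : ∃ m, n = m + 3 := ⟨n - 3, by omega⟩
    rcases Nat.mod_two_eq_zero_or_one (m + 3) with hp | hp
    · rw [chromaticNumber_cycle_even hp, sparing_cycle_even hp]
      simp
    · rw [chromaticNumber_cycle_odd hp, sparing_cycle_odd hp]
      rw [Nat.cast_one]
      decide
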